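/- The function Z(x) = log(eˣ + 1) satisfies (H D₀ Z)(x) = 0 pointwise, where D₀ = -d²/dx² and H = -d²/dx² + 1 + V with V(x) = -(3/2)/cosh(x/2)². -/

import Mathlib

private lemma hZ1 : deriv (fun z : ℝ => Real.log (Real.exp z + 1))
    = fun x : ℝ => Real.exp x / (Real.exp x + 1) := by
  funext x
  have h := ((Real.hasDerivAt_exp x).add_const 1).log (by positivity)
  simpa using h.deriv

private lemma hZ2 : deriv (deriv (fun z : ℝ => Real.log (Real.exp z + 1)))
    = fun x : ℝ => Real.exp x / (Real.exp x + 1) ^ 2 := by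
  rw [hZ1]
  funext x
  have h : HasDerivAt (fun x : ℝ => Real.exp x / (Real.exp x + 1)) _ x :=
    (Real.hasDerivAt_exp x).div ((Real.hasDerivAt_exp x).add_const 1)
    (by positivity)
  rw [h.deriv]
  have hne : Real.exp x + 1 ≠ 0 := by positivity
  field_simp
  ring

private lemma hf1 (x : ℝ) : HasDerivAt (fun y : ℝ => Real.exp y / (Real.exp y + 1) ^ 2)
    (Real.exp x * (1 - Real.exp x) / (Real.exp x + 1) ^ 3) x := by
  have h : HasDerivAt (fun y : ℝ => Real.exp y / (Real.exp y + 1) ^ 2) _ x := (Real.hasDerivAt_exp x).div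
    (((Real.hasDerivAt_exp x).add_const 1).pow 2) (by positivity)
  convert h using 1
  have hne : Real.exp x + 1 ≠ 0 := by positivity
  field_simp
  ring

private lemma hf2 (x : ℝ) :
    HasDerivAt (fun y : ℝ => Real.exp y * (1 - Real.exp y) / (Real.exp y + 1) ^ 3)
    (Real.exp x * (Real.exp x ^ 2 - 4 * Real.exp x + 1) / (Real.exp x + 1) ^ 4) x := by
  have hnum : HasDerivAt (fun y : ℝ => Real.exp y * (1 - Real.exp y))
      (Real.exp x * (1 - Real.exp x) + Real.exp x * (0 - Real.exp x)) x :=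
    (Real.hasDerivAt_exp x).mul ((hasDerivAt_const x 1).sub (Real.hasDerivAt_exp x))
  have h : HasDerivAt (fun y : ℝ => Real.exp y * (1 - Real.exp y) / (Real.exp y + 1) ^ 3) _ x :=
    hnum.div (((Real.hasDerivAt_exp x).add_const 1).pow 3) (by positivity)
  convert h using 1
  have hne : Real.exp x + 1 ≠ 0 := by positivity
  field_simp
  ring

/-- Z(x) = log(eˣ + 1) satisfies (H D₀ Z)(x) = 0 where D₀f = -f'' and
    Hf = -f'' + f + Vf with V(x) = -(3/2)/cosh(x/2)². -/
theorem stmt_5 (x : ℝ) :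
    -(deriv (deriv (fun y : ℝ =>
        -(deriv (deriv (fun z : ℝ => Real.log (Real.exp z + 1))) y))) x)
      + (-(deriv (deriv (fun z : ℝ => Real.log (Real.exp z + 1))) x))
      + (-(3 / 2) / (Real.cosh (x / 2)) ^ 2)
        * (-(deriv (deriv (fun z : ℝ => Real.log (Real.exp z + 1))) x)) = 0 := by
  have hfun : (fun y : ℝ => -(deriv (deriv (fun z : ℝ => Real.log (Real.exp z + 1))) y))
      = fun y : ℝ => -(Real.exp y / (Real.exp y + 1) ^ 2) := by
    funext y; rw [hZ2]
  rw [hfun, hZ2]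
  have hd1 : deriv (fun y : ℝ => -(Real.exp y / (Real.exp y + 1) ^ 2))
      = fun y : ℝ => -(Real.exp y * (1 - Real.exp y) / (Real.exp y + 1) ^ 3) := by
    funext y; exact (hf1 y).neg.deriv
  rw [hd1]
  have hd2 : deriv (fun y : ℝ => -(Real.exp y * (1 - Real.exp y) / (Real.exp y + 1) ^ 3)) x
      = -(Real.exp x * (Real.exp x ^ 2 - 4 * Real.exp x + 1) / (Real.exp x + 1) ^ 4) :=
    (hf2 x).neg.deriv
  rw [hd2]
  have hu : Real.exp (x / 2) ^ 2 = Real.exp x := by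
    rw [← Real.exp_nat_mul]; norm_num; ring_nf
  have hc : Real.cosh (x / 2) ^ 2 = (Real.exp x + 1) ^ 2 / (4 * Real.exp x) := by
    rw [Real.cosh_eq, Real.exp_neg, ← hu]
    have hpos : Real.exp (x / 2) ≠ 0 := (Real.exp_pos _).ne'
    field_simp
    ring
  rw [hc]
  have hne : Real.exp x + 1 ≠ 0 := by positivity
  have hne2 : Real.exp x ≠ 0 := (Real.exp_pos _).ne'
  field_simp
  ring
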